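/- Let (a_n)_{n≥0} be a log-concave sequence of nonnegative reals. Then for every n ≥ 0, the coefficient inequality Σ_{k∈ℤ} [C(n,k-1) − C(n,k)] a_k a_{n-k+2} ≥ 0 holds, where C(n,k) = 0 for k < 0 or k > n and a_k = 0 for k < 0. -/
import Mathlib

open scoped BigOperators

/-- For a nonnegative log-concave sequence `(a n)`,
`∑_k (C(n,k-1) - C(n,k)) a_k a_{n-k+2} ≥ 0`, where `C(n,k) = 0` for `k < 0` or
`k > n` and `a_k = 0` for `k < 0` (the sum effectively runs over `0 ≤ k ≤ n+2`). -/
theorem stmt6 (a : ℕ → ℝ) (hnonneg : ∀ n, 0 ≤ a n)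
    (hsupp : ∀ m n k : ℕ, m ≤ n → n ≤ k → 0 < a m → 0 < a k → 0 < a n)
    (hlc : ∀ n : ℕ, 1 ≤ n → a (n - 1) * a (n + 1) ≤ a n ^ 2) (n : ℕ) :
    0 ≤ ∑ k ∈ Finset.range (n + 3),
      ((if 1 ≤ k then (n.choose (k - 1) : ℝ) else 0) - (n.choose k : ℝ))
        * a k * a (n + 2 - k) := by
  -- Key log-concavity lemma: for i ≤ j, a i * a (j+1) ≤ a (i+1) * a j.
  have pos : ∀ d i : ℕ, (∀ m, i ≤ m → m ≤ i + d + 1 → 0 < a m) →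
      a i * a (i + d + 1) ≤ a (i + 1) * a (i + d) := by
    intro d
    induction d with
    | zero => intro i _; simp [mul_comm]
    | succ d ih =>
      intro i hp
      have h1 := ih (i + 1) (fun m hm1 hm2 => hp m (by omega) (by omega))
      have h2 := hlc (i + 1) (by omega)
      have hi1 : 0 < a (i + 1) := hp (i + 1) (by omega) (by omega)
      have e1 : i + 1 + d + 1 = i + (d + 1) + 1 := by omega
      have e2 : i + 1 + 1 = i + 2 := by omega
      have e3 : i + 1 - 1 = i := by omega
      have e4 : i + 1 + d = i + (d + 1) := by omega
      rw [e1, e2, e4] at h1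
      rw [e3] at h2
      nlinarith [mul_le_mul_of_nonneg_left h1 (hnonneg i),
        mul_le_mul_of_nonneg_right h2 (hnonneg (i + (d + 1))),
        hnonneg (i + (d + 1) + 1), hnonneg i]
  have key : ∀ i j : ℕ, i ≤ j → a i * a (j + 1) ≤ a (i + 1) * a j := by
    intro i j hij
    rcases le_or_gt (a i) 0 with h0 | h0
    · have : a i = 0 := le_antisymm h0 (hnonneg i)
      rw [this, zero_mul]
      exact mul_nonneg (hnonneg _) (hnonneg _)
    rcases le_or_gt (a (j + 1)) 0 with h1 | h1
    · have : a (j + 1) = 0 := le_antisymm h1 (hnonneg _)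
      rw [this, mul_zero]
      exact mul_nonneg (hnonneg _) (hnonneg _)
    have := pos (j - i) i (fun m hm1 hm2 => hsupp i m (j + 1) hm1 (by omega) h0 h1)
    have e : i + (j - i) + 1 = j + 1 := by omega
    have e2 : i + (j - i) = j := by omega
    rwa [e, e2] at this
  -- Rewrite the sum.
  have hsum : (∑ k ∈ Finset.range (n + 3),
        ((if 1 ≤ k then (n.choose (k - 1) : ℝ) else 0) - (n.choose k : ℝ))
          * a k * a (n + 2 - k))
      = ∑ j ∈ Finset.range (n + 2),
          (n.choose j : ℝ) * (a (j + 1) * a (n + 1 - j) - a j * a (n + 2 - j)) := by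
    have expand : ∀ k, ((if 1 ≤ k then (n.choose (k - 1) : ℝ) else 0) - (n.choose k : ℝ))
          * a k * a (n + 2 - k)
        = (if 1 ≤ k then (n.choose (k - 1) : ℝ) else 0) * a k * a (n + 2 - k)
          - (n.choose k : ℝ) * a k * a (n + 2 - k) := by
      intro k; ring
    rw [Finset.sum_congr rfl (fun k _ => expand k), Finset.sum_sub_distrib]
    have hg : (∑ k ∈ Finset.range (n + 3),
          (if 1 ≤ k then (n.choose (k - 1) : ℝ) else 0) * a k * a (n + 2 - k))
        = ∑ j ∈ Finset.range (n + 2), (n.choose j : ℝ) * (a (j + 1) * a (n + 1 - j)) := by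
      rw [Finset.sum_range_succ']
      have h0 : (if 1 ≤ 0 then (n.choose (0 - 1) : ℝ) else 0) * a 0 * a (n + 2 - 0) = 0 := by
        rw [if_neg (by omega)]; ring
      rw [h0, add_zero]
      apply Finset.sum_congr rfl
      intro j _
      have e1 : n + 2 - (j + 1) = n + 1 - j := by omega
      have e2 : j + 1 - 1 = j := by omega
      rw [if_pos (by omega : 1 ≤ j + 1), e1, e2, mul_assoc]
    have hh : (∑ k ∈ Finset.range (n + 3), (n.choose k : ℝ) * a k * a (n + 2 - k))
        = ∑ k ∈ Finset.range (n + 2), (n.choose k : ℝ) * (a k * a (n + 2 - k)) := by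
      rw [Finset.sum_range_succ]
      rw [Nat.choose_eq_zero_of_lt (by omega : n < n + 2)]
      simp [mul_assoc]
    rw [hg, hh, ← Finset.sum_sub_distrib]
    apply Finset.sum_congr rfl
    intro j _
    ring
  rw [hsum]
  -- Symmetrize.
  set f : ℕ → ℝ := fun j =>
    (n.choose j : ℝ) * (a (j + 1) * a (n + 1 - j) - a j * a (n + 2 - j)) with hf
  have hrefl : ∑ j ∈ Finset.range (n + 2), f j
      = ∑ j ∈ Finset.range (n + 2), f (n + 1 - j) := by
    have := Finset.sum_range_reflect f (n + 2)
    rw [← this]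
    apply Finset.sum_congr rfl
    intro j hj
    congr 1
  have hterm : ∀ j ∈ Finset.range (n + 2), 0 ≤ f j + f (n + 1 - j) := by
    intro j hj
    simp only [Finset.mem_range] at hj
    have hj' : j ≤ n + 1 := by omega
    -- rewrite f (n+1-j)
    have e1 : n + 1 - j + 1 = n + 2 - j := by omega
    have e2 : n + 1 - (n + 1 - j) = j := by omega
    have e3 : n + 2 - (n + 1 - j) = j + 1 := by omega
    have hfr : f (n + 1 - j) = (n.choose (n + 1 - j) : ℝ)
        * (a (n + 2 - j) * a j - a (n + 1 - j) * a (j + 1)) := by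
      rw [hf]; simp only []
      rw [e1, e2, e3]
    rcases Nat.eq_zero_or_pos j with rfl | hj1
    · -- j = 0
      have hz : f (n + 1 - 0) = 0 := by
        rw [hfr, Nat.choose_eq_zero_of_lt (by omega : n < n + 1 - 0)]
        norm_num
      rw [hz, add_zero]
      simp only [hf, Nat.choose_zero_right, Nat.cast_one, one_mul, Nat.sub_zero]
      have hc := key 0 (n + 1) (by omega)
      rw [(by omega : n + 1 + 1 = n + 2)] at hc
      linarith
    · -- 1 ≤ j
      have hsymm : n.choose (n + 1 - j) = n.choose (j - 1) := by
        rcases le_or_gt j (n + 1) with h | h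
        · have : n + 1 - j = n - (j - 1) := by omega
          rw [this, Nat.choose_symm (by omega)]
        · omega
      rw [hfr, hsymm, hf]
      have hcomb : (n.choose j : ℝ) * (a (j + 1) * a (n + 1 - j) - a j * a (n + 2 - j))
            + (n.choose (j - 1) : ℝ) * (a (n + 2 - j) * a j - a (n + 1 - j) * a (j + 1))
          = ((n.choose j : ℝ) - (n.choose (j - 1) : ℝ))
            * (a (j + 1) * a (n + 1 - j) - a j * a (n + 2 - j)) := by ring
      rw [hcomb]
      rcases lt_trichotomy (2 * j) (n + 1) with hlt | heq | hgt
      · -- increasing side: choose (j-1) ≤ choose j, c_j ≥ 0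
        have hb : n.choose (j - 1) ≤ n.choose j := by
          have := Nat.choose_le_succ_of_lt_half_left (r := j - 1) (n := n) (by omega)
          have e : j - 1 + 1 = j := by omega
          rwa [e] at this
        have hc : a j * a (n + 2 - j) ≤ a (j + 1) * a (n + 1 - j) := by
          have := key j (n + 1 - j) (by omega)
          have e : n + 1 - j + 1 = n + 2 - j := by omega
          rwa [e] at this
        have : (0:ℝ) ≤ (n.choose j : ℝ) - (n.choose (j - 1) : ℝ) :=
          sub_nonneg.mpr (by exact_mod_cast hb)
        nlinarith
      · -- middle: choose equal
        have hb : n.choose (j - 1) = n.choose j := by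
          have h := Nat.choose_symm (show j - 1 ≤ n by omega)
          rw [(show n - (j - 1) = j by omega)] at h
          exact h.symm
        rw [hb, sub_self, zero_mul]
      · -- decreasing side
        have hb : n.choose j ≤ n.choose (j - 1) := by
          rcases le_or_gt j n with h | h
          · have h1 : n.choose j = n.choose (n - j) := (Nat.choose_symm h).symm
            have h2 : n.choose (j - 1) = n.choose (n - j + 1) := by
              have : n - (j - 1) = n - j + 1 := by omega
              rw [← Nat.choose_symm (by omega : j - 1 ≤ n), this]
            rw [h1, h2]
            exact Nat.choose_le_succ_of_lt_half_left (by omega)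
          · rw [Nat.choose_eq_zero_of_lt h]; exact Nat.zero_le _
        have hc : a (n + 1 - j) * a (j + 1) ≤ a (n + 2 - j) * a j := by
          have := key (n + 1 - j) j (by omega)
          have e : n + 1 - j + 1 = n + 2 - j := by omega
          rwa [e] at this
        have h1 : (n.choose j : ℝ) - (n.choose (j - 1) : ℝ) ≤ 0 := by
          exact sub_nonpos.mpr (by exact_mod_cast hb)
        nlinarith
  calc (0:ℝ) ≤ (1/2) * ∑ j ∈ Finset.range (n + 2), (f j + f (n + 1 - j)) := by
        apply mul_nonneg (by norm_num)
        exact Finset.sum_nonneg hterm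
    _ = ∑ j ∈ Finset.range (n + 2), f j := by
        rw [Finset.sum_add_distrib, ← hrefl]
        ring
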